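/- arXiv:1005.0166 — 6 statements merged into one kernel-verified Lean document; each statement's English description precedes it below -/
import Mathlib

section
/- Let A = C + K ∈ L(Y), where C ∈ L(Y) is bijective with C⁻¹ ∈ S(Y), and K ∈ S(Y) ∩ M(Y). Suppose there exist B ∈ L(Y) and T₁, T₂ ∈ SN(Y) such that A∘B = I + T₁ and B∘A = I + T₂. Then A is Fredholm: the kernel of A is finite-dimensional and the range of A is a closed subspace of Y of finite codimension. -/
open Filter Topology

/-- Conditions (i) and (ii) on the approximate identity `P`. -/
def ApproxId {Y : Type*} [NormedAddCommGroup Y] [NormedSpace ℂ Y]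
    (P : ℕ → Y →L[ℂ] Y) : Prop :=
  (∀ x : Y, IsLUB (Set.range fun n => ‖P n x‖) ‖x‖) ∧
  ∀ m : ℕ, ∃ Nm : ℕ, m ≤ Nm ∧ ∀ n, Nm ≤ n →
    (P n).comp (P m) = P m ∧ (P m).comp (P n) = P m

/-- `Q n = I - P n`. -/
def Qop {Y : Type*} [NormedAddCommGroup Y] [NormedSpace ℂ Y]
    (P : ℕ → Y →L[ℂ] Y) (n : ℕ) : Y →L[ℂ] Y :=
  ContinuousLinearMap.id ℂ Y - P n

/-- Strict convergence of a sequence. -/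
def SConv {Y : Type*} [NormedAddCommGroup Y] [NormedSpace ℂ Y]
    (P : ℕ → Y →L[ℂ] Y) (x : ℕ → Y) (x₀ : Y) : Prop :=
  (∃ C : ℝ, ∀ j, ‖x j‖ ≤ C) ∧
  ∀ m : ℕ, Tendsto (fun j => ‖P m (x j - x₀)‖) atTop (𝓝 0)

/-- `S(Y)`: sequentially continuous operators on `(Y,s)`. -/
def MemS {Y : Type*} [NormedAddCommGroup Y] [NormedSpace ℂ Y]
    (P : ℕ → Y →L[ℂ] Y) (A : Y →L[ℂ] Y) : Prop :=
  ∀ (x : ℕ → Y) (x₀ : Y), SConv P x x₀ → SConv P (fun j => A (x j)) (A x₀)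

/-- `SN(Y)`. -/
def MemSN {Y : Type*} [NormedAddCommGroup Y] [NormedSpace ℂ Y]
    (P : ℕ → Y →L[ℂ] Y) (A : Y →L[ℂ] Y) : Prop :=
  ∀ (x : ℕ → Y) (x₀ : Y), SConv P x x₀ →
    Tendsto (fun j => ‖A (x j) - A x₀‖) atTop (𝓝 0)

/-- `M(Y)`: Montel operators. -/
def MemM {Y : Type*} [NormedAddCommGroup Y] [NormedSpace ℂ Y]
    (P : ℕ → Y →L[ℂ] Y) (K : Y →L[ℂ] Y) : Prop :=
  ∀ x : ℕ → Y, (∃ C : ℝ, ∀ j, ‖x j‖ ≤ C) →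
    ∃ (φ : ℕ → ℕ) (y : Y), StrictMono φ ∧ SConv P (fun i => K (x (φ i))) y

/-- `K(Y,P)`. -/
def MemKP {Y : Type*} [NormedAddCommGroup Y] [NormedSpace ℂ Y]
    (P : ℕ → Y →L[ℂ] Y) (K : Y →L[ℂ] Y) : Prop :=
  Tendsto (fun n => ‖K.comp (Qop P n)‖) atTop (𝓝 0) ∧
  Tendsto (fun n => ‖(Qop P n).comp K‖) atTop (𝓝 0)

/-- `L(Y,P)`. -/
def MemLP {Y : Type*} [NormedAddCommGroup Y] [NormedSpace ℂ Y]
    (P : ℕ → Y →L[ℂ] Y) (A : Y →L[ℂ] Y) : Prop :=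
  ∀ K : Y →L[ℂ] Y, MemKP P K → MemKP P (A.comp K) ∧ MemKP P (K.comp A)

/-- Fredholm: finite dimensional kernel, closed range of finite codimension. -/
def IsFredholmOp {E : Type*} [NormedAddCommGroup E] [NormedSpace ℂ E]
    (A : E →L[ℂ] E) : Prop :=
  FiniteDimensional ℂ (LinearMap.ker (A : E →ₗ[ℂ] E)) ∧
  IsClosed (LinearMap.range (A : E →ₗ[ℂ] E) : Set E) ∧
  FiniteDimensional ℂ (E ⧸ LinearMap.range (A : E →ₗ[ℂ] E))

section Aux
variable {Y : Type*} [NormedAddCommGroup Y] [NormedSpace ℂ Y]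

lemma memS_id (P : ℕ → Y →L[ℂ] Y) : MemS P (ContinuousLinearMap.id ℂ Y) := by
  intro x x₀ h; simpa using h

lemma subseq_tendsto (P : ℕ → Y →L[ℂ] Y) {Kk G T R : Y →L[ℂ] Y}
    (hK : MemM P Kk) (hG : MemS P G) (hT : MemSN P T)
    (x : ℕ → Y) {Cb : ℝ} (hx : ∀ j, ‖x j‖ ≤ Cb) :
    ∃ φ : ℕ → ℕ, StrictMono φ ∧ ∃ z : Y,
      Tendsto (fun i => T (G (Kk (R (x (φ i)))))) atTop (𝓝 z) := by
  have hb : ∀ j, ‖R (x j)‖ ≤ ‖R‖ * Cb := fun j =>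
    (R.le_opNorm _).trans (mul_le_mul_of_nonneg_left (hx j) (norm_nonneg R))
  obtain ⟨φ, y, hφ, hs⟩ := hK (fun j => R (x j)) ⟨_, hb⟩
  exact ⟨φ, hφ, T (G y), tendsto_iff_norm_sub_tendsto_zero.2 (hT _ _ (hG _ _ hs))⟩

end Aux

/-- If `A = C + K` with `C` bijective, `C⁻¹ ∈ S(Y)`,
`K ∈ S(Y) ∩ M(Y)`, and `A B = I + T₁`, `B A = I + T₂` with `T₁, T₂ ∈ SN(Y)`,
then `A` is Fredholm. -/
theorem statement0 {Y : Type*} [NormedAddCommGroup Y] [NormedSpace ℂ Y] [CompleteSpace Y]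
    (P : ℕ → Y →L[ℂ] Y) (hP : ApproxId P)
    (A C K B T₁ T₂ : Y →L[ℂ] Y)
    (hACK : A = C + K)
    (hCbij : Function.Bijective C)
    (hCinv : ∃ Cinv : Y →L[ℂ] Y,
      C.comp Cinv = ContinuousLinearMap.id ℂ Y ∧
      Cinv.comp C = ContinuousLinearMap.id ℂ Y ∧ MemS P Cinv)
    (hKS : MemS P K) (hKM : MemM P K)
    (hT₁ : MemSN P T₁) (hT₂ : MemSN P T₂)
    (hAB : A.comp B = ContinuousLinearMap.id ℂ Y + T₁)
    (hBA : B.comp A = ContinuousLinearMap.id ℂ Y + T₂) :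
    IsFredholmOp A := by
  obtain ⟨Cinv, hCC, hCiC, hCiS⟩ := hCinv
  -- pointwise identities
  have hCiCx : ∀ x : Y, Cinv (C x) = x := fun x => by
    have := ContinuousLinearMap.ext_iff.1 hCiC x; simpa using this
  have hCCix : ∀ x : Y, C (Cinv x) = x := fun x => by
    have := ContinuousLinearMap.ext_iff.1 hCC x; simpa using this
  have hAx : ∀ x : Y, A x = C x + K x := fun x => by
    rw [hACK]; simp
  have hBAx : ∀ x : Y, B (A x) = x + T₂ x := fun x => by
    have := ContinuousLinearMap.ext_iff.1 hBA x; simpa using this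
  have hABx : ∀ y : Y, A (B y) = y + T₁ y := fun y => by
    have := ContinuousLinearMap.ext_iff.1 hAB y; simpa using this
  have hCiA : ∀ x : Y, Cinv (A x) = x + Cinv (K x) := fun x => by
    rw [hAx, map_add, hCiCx]
  have hACi : ∀ y : Y, A (Cinv y) = y + K (Cinv y) := fun y => by
    rw [hAx, hCCix]
  -- key identity 2 : `x = B(Ax) - T₂(Cinv(Ax)) + T₂(Cinv(Kx))`
  have key2 : ∀ x : Y, x = B (A x) - T₂ (Cinv (A x)) + T₂ (Cinv (K x)) := by
    intro x
    rw [hBAx, hCiA, map_add]; abel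
  -- key identity 3 : `y - T₁(K(Cinv y)) ∈ range A`
  have key3 : ∀ y : Y, y - T₁ (K (Cinv y)) = A (Cinv y - B (K (Cinv y))) := by
    intro y
    rw [map_sub, hACi, hABx]; abel
  -- Part 1 : the kernel is finite dimensional
  have hker : ∀ x : Y, A x = 0 → x = T₂ (Cinv (K x)) := by
    intro x hx
    have h := key2 x
    rw [hx] at h
    simpa using h
  have hcompact : IsCompact (Metric.closedBall (0 : LinearMap.ker (A : Y →ₗ[ℂ] Y)) 1) := by
    apply IsSeqCompact.isCompact
    intro u hu
    have hub : ∀ n, ‖((u n : Y))‖ ≤ 1 := by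
      intro n
      have := hu n
      rw [Metric.mem_closedBall, dist_zero_right] at this
      exact this
    obtain ⟨φ, hφ, z, hz⟩ := subseq_tendsto P hKM hCiS hT₂
      (R := ContinuousLinearMap.id ℂ Y) (fun n => (u n : Y)) hub
    have huz : Tendsto (fun i => ((u (φ i) : Y))) atTop (𝓝 z) := by
      refine hz.congr fun i => ?_
      simp only [ContinuousLinearMap.id_apply]
      exact (hker _ (u (φ i)).2).symm
    have hzker : z ∈ LinearMap.ker (A : Y →ₗ[ℂ] Y) := by
      have : Tendsto (fun i => A ((u (φ i) : Y))) atTop (𝓝 (A z)) :=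
        (A.continuous.tendsto z).comp huz
      have h0 : (fun i => A ((u (φ i) : Y))) = fun _ => (0 : Y) := by
        funext i; exact (u (φ i)).2
      rw [h0] at this
      exact (tendsto_nhds_unique tendsto_const_nhds this).symm
    have hznorm : ‖z‖ ≤ 1 :=
      le_of_tendsto ((continuous_norm.tendsto z).comp huz)
        (Eventually.of_forall fun i => hub (φ i))
    refine ⟨⟨z, hzker⟩, ?_, φ, hφ, ?_⟩
    · rw [Metric.mem_closedBall, dist_zero_right]; exact hznorm
    · exact tendsto_subtype_rng.2 huz
  haveI hfdker : FiniteDimensional ℂ (LinearMap.ker (A : Y →ₗ[ℂ] Y)) :=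
    FiniteDimensional.of_isCompact_closedBall₀ ℂ one_pos hcompact
  refine ⟨hfdker, ?_⟩
  -- projection onto the kernel
  obtain ⟨f, hf⟩ := Submodule.ClosedComplemented.of_finiteDimensional (LinearMap.ker (A : Y →ₗ[ℂ] Y))
  set W : Submodule ℂ Y := LinearMap.ker (f : Y →ₗ[ℂ] LinearMap.ker (A : Y →ₗ[ℂ] Y)) with hW
  -- A is bounded below on W
  have hbdd : ∃ c : ℝ, 0 < c ∧ ∀ w ∈ W, ‖w‖ ≤ c * ‖A w‖ := by
    by_contra h
    push_neg at h
    have h' : ∀ n : ℕ, ∃ w ∈ W, ‖w‖ > (n + 1 : ℝ) * ‖A w‖ := by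
      intro n
      obtain ⟨w, hwW, hw⟩ := h (n + 1 : ℝ) (by positivity)
      exact ⟨w, hwW, hw⟩
    choose w hwW hw using h'
    have hwne : ∀ n, w n ≠ 0 := by
      intro n h0
      have := hw n
      rw [h0] at this
      simp at this
    set u : ℕ → Y := fun n => ((‖w n‖⁻¹ : ℝ) : ℂ) • w n with hu
    have hnormsmul : ∀ n, ∀ v : Y, ‖((‖w n‖⁻¹ : ℝ) : ℂ) • v‖ = ‖w n‖⁻¹ * ‖v‖ := by
      intro n v
      rw [norm_smul, Complex.norm_real, Real.norm_eq_abs,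
        abs_of_nonneg (inv_nonneg.2 (norm_nonneg _))]
    have hun : ∀ n, ‖u n‖ = 1 := fun n => by
      rw [hu]
      simp only []
      rw [hnormsmul, inv_mul_cancel₀ (norm_ne_zero_iff.2 (hwne n))]
    have huW : ∀ n, u n ∈ W := fun n => W.smul_mem _ (hwW n)
    have hAu : ∀ n, ‖A (u n)‖ < 1 / (n + 1 : ℝ) := by
      intro n
      have hwpos : (0:ℝ) < ‖w n‖ := norm_pos_iff.2 (hwne n)
      have hnpos : (0:ℝ) < (n:ℝ) + 1 := by positivity
      have h1 : ‖A (w n)‖ < ‖w n‖ / ((n:ℝ) + 1) := by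
        rw [lt_div_iff₀ hnpos]
        calc ‖A (w n)‖ * ((n:ℝ)+1) = ((n:ℝ)+1) * ‖A (w n)‖ := by ring
        _ < ‖w n‖ := hw n
      have h2 : ‖A (u n)‖ = ‖w n‖⁻¹ * ‖A (w n)‖ := by
        rw [hu]; simp only [map_smul]; exact hnormsmul n _
      rw [h2]
      calc ‖w n‖⁻¹ * ‖A (w n)‖ < ‖w n‖⁻¹ * (‖w n‖ / ((n:ℝ)+1)) := by
            exact mul_lt_mul_of_pos_left h1 (inv_pos.2 hwpos)
        _ = 1 / ((n:ℝ)+1) := by field_simp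
    have hAu0 : Tendsto (fun n => A (u n)) atTop (𝓝 0) := by
      rw [tendsto_iff_norm_sub_tendsto_zero]
      exact squeeze_zero (fun n => norm_nonneg _)
        (fun n => by rw [sub_zero]; exact (hAu n).le)
        tendsto_one_div_add_atTop_nhds_zero_nat
    obtain ⟨φ, hφ, z, hz⟩ := subseq_tendsto P hKM hCiS hT₂
      (R := ContinuousLinearMap.id ℂ Y) u (fun n => (hun n).le)
    have hz' : Tendsto (fun i => T₂ (Cinv (K (u (φ i))))) atTop (𝓝 z) := by
      refine hz.congr fun i => by simp
    have hA0 : Tendsto (fun i => A (u (φ i))) atTop (𝓝 0) :=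
      hAu0.comp hφ.tendsto_atTop
    have huz : Tendsto (fun i => u (φ i)) atTop (𝓝 z) := by
      have h1 : Tendsto (fun i => B (A (u (φ i)))) atTop (𝓝 0) := by
        have := (B.continuous.tendsto 0).comp hA0
        simpa [Function.comp_def] using this
      have hCi0 : Tendsto (fun i => Cinv (A (u (φ i)))) atTop (𝓝 0) := by
        have := (Cinv.continuous.tendsto 0).comp hA0
        simpa [Function.comp_def] using this
      have h2 : Tendsto (fun i => T₂ (Cinv (A (u (φ i))))) atTop (𝓝 0) := by
        have := (T₂.continuous.tendsto 0).comp hCi0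
        simpa [Function.comp_def] using this
      have h3 := (h1.sub h2).add hz'
      rw [show (0:Y) - 0 + z = z by simp] at h3
      exact h3.congr fun i => (key2 (u (φ i))).symm
    have hzW : z ∈ W := by
      have : IsClosed (W : Set Y) := ContinuousLinearMap.isClosed_ker f
      exact this.mem_of_tendsto huz (Eventually.of_forall fun i => huW (φ i))
    have hzker : z ∈ LinearMap.ker (A : Y →ₗ[ℂ] Y) := by
      have hc : Tendsto (fun i => A (u (φ i))) atTop (𝓝 (A z)) :=
        (A.continuous.tendsto z).comp huz
      exact (tendsto_nhds_unique hA0 hc).symm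
    have hz1 : ‖z‖ = 1 := by
      have : Tendsto (fun i => ‖u (φ i)‖) atTop (𝓝 ‖z‖) :=
        (continuous_norm.tendsto z).comp huz
      have h1 : (fun i => ‖u (φ i)‖) = fun _ => (1 : ℝ) := funext fun i => hun (φ i)
      rw [h1] at this
      exact tendsto_nhds_unique this tendsto_const_nhds
    -- z ∈ ker A ∩ W ⇒ z = 0
    have hz0 : z = 0 := by
      have h1 : f z = ⟨z, hzker⟩ := hf ⟨z, hzker⟩
      have h2 : f z = 0 := hzW
      have : (⟨z, hzker⟩ : LinearMap.ker (A : Y →ₗ[ℂ] Y)) = 0 := by rw [← h1, h2]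
      simpa using congrArg (Subtype.val) this
    rw [hz0, norm_zero] at hz1
    norm_num at hz1
  obtain ⟨c, hc, hcb⟩ := hbdd
  -- the range of A is A '' W and closed
  haveI : CompleteSpace W := (ContinuousLinearMap.isClosed_ker f).completeSpace_coe
  set g : W →L[ℂ] Y := A.comp W.subtypeL with hg
  have hanti : AntilipschitzWith c.toNNReal g := by
    apply g.antilipschitz_of_bound
    intro x
    rw [Real.coe_toNNReal c hc.le]
    exact hcb (x : Y) x.2
  have hclosedg : IsClosed (Set.range g) :=
    hanti.isClosed_range g.uniformContinuous
  have hrange : (LinearMap.range (A : Y →ₗ[ℂ] Y) : Set Y) = Set.range g := by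
    apply Set.Subset.antisymm
    · rintro _ ⟨x, rfl⟩
      have hfx : (f x : Y) ∈ LinearMap.ker (A : Y →ₗ[ℂ] Y) := (f x).2
      have hxw : x - (f x : Y) ∈ W := by
        have : f (x - (f x : Y)) = f x - f ((f x : Y)) := map_sub f _ _
        have h2 : f ((f x : Y)) = f x := hf (f x)
        simp only [LinearMap.mem_ker, hW]
        change f (x - (f x : Y)) = 0
        rw [this, h2, sub_self]
      refine ⟨⟨x - (f x : Y), hxw⟩, ?_⟩
      show A (x - (f x : Y)) = A x
      rw [map_sub, show A (f x : Y) = 0 from hfx, sub_zero]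
    · rintro _ ⟨⟨x, hx⟩, rfl⟩
      exact ⟨x, rfl⟩
  have hclosed : IsClosed (LinearMap.range (A : Y →ₗ[ℂ] Y) : Set Y) := by
    rw [hrange]; exact hclosedg
  refine ⟨hclosed, ?_⟩
  -- Part 3 : the quotient is finite dimensional
  haveI : IsClosed ((LinearMap.range (A : Y →ₗ[ℂ] Y) : Submodule ℂ Y) : Set Y) := hclosed
  set Rg : Submodule ℂ Y := LinearMap.range (A : Y →ₗ[ℂ] Y) with hRg
  have hquot : ∀ y : Y, (Submodule.Quotient.mk y : Y ⧸ Rg)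
      = Submodule.Quotient.mk (T₁ (K (Cinv y))) := by
    intro y
    rw [Submodule.Quotient.eq]
    exact ⟨_, (key3 y).symm⟩
  have hqcompact : IsCompact (Metric.closedBall (0 : Y ⧸ Rg) 1) := by
    apply IsSeqCompact.isCompact
    intro q hq
    have hqn : ∀ n, ‖q n‖ ≤ 1 := by
      intro n
      have := hq n
      rwa [Metric.mem_closedBall, dist_zero_right] at this
    have hlift : ∀ n, ∃ m : Y, Submodule.Quotient.mk m = q n ∧ ‖m‖ < ‖q n‖ + 1 :=
      fun n => Submodule.Quotient.norm_mk_lt (q n) one_pos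
    choose y hy hyn using hlift
    have hyb : ∀ n, ‖y n‖ ≤ 2 := fun n => by
      have := hyn n
      have h2 := hqn n
      linarith
    obtain ⟨φ, hφ, z, hz⟩ := subseq_tendsto P hKM (memS_id P) hT₁ (R := Cinv) y hyb
    have hz' : Tendsto (fun i => T₁ (K (Cinv (y (φ i))))) atTop (𝓝 z) := by
      refine hz.congr fun i => by simp
    have hqz : Tendsto (fun i => q (φ i)) atTop (𝓝 (Submodule.Quotient.mk z)) := by
      rw [tendsto_iff_norm_sub_tendsto_zero]
      apply squeeze_zero (fun i => norm_nonneg _) (fun i => ?_)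
        (tendsto_iff_norm_sub_tendsto_zero.1 hz')
      rw [← hy (φ i), hquot (y (φ i))]
      calc ‖(Submodule.Quotient.mk (T₁ (K (Cinv (y (φ i))))) : Y ⧸ Rg)
            - Submodule.Quotient.mk z‖
          = ‖(Submodule.Quotient.mk (T₁ (K (Cinv (y (φ i)))) - z) : Y ⧸ Rg)‖ := by
            rw [← Submodule.Quotient.mk_sub]
        _ ≤ ‖T₁ (K (Cinv (y (φ i)))) - z‖ := Submodule.Quotient.norm_mk_le _ _
    refine ⟨Submodule.Quotient.mk z, ?_, φ, hφ, hqz⟩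
    rw [Metric.mem_closedBall, dist_zero_right]
    refine le_of_tendsto ((continuous_norm.tendsto _).comp hqz)
      (Eventually.of_forall fun i => hqn (φ i))
  exact FiniteDimensional.of_isCompact_closedBall₀ ℂ one_pos hqcompact
end

section
/- An operator A ∈ L(Y) belongs to SN(Y), i.e. x_j →s x implies ‖A x_j − A x‖ → 0, if and only if ‖A Q_n‖ → 0 as n → ∞. -/
open Filter Topology

/-- `A ∈ SN(Y)` iff `‖A Qₙ‖ → 0`. -/
theorem statement12 {Y : Type*} [NormedAddCommGroup Y] [NormedSpace ℂ Y] [CompleteSpace Y]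
    (P : ℕ → Y →L[ℂ] Y) (hP : ApproxId P) (A : Y →L[ℂ] Y) :
    MemSN P A ↔ Tendsto (fun n => ‖A.comp (Qop P n)‖) atTop (𝓝 0) := by
  obtain ⟨hP1, hP2⟩ := hP
  have hPle : ∀ (n : ℕ) (x : Y), ‖P n x‖ ≤ ‖x‖ := fun n x => (hP1 x).1 ⟨n, rfl⟩
  have hQle : ∀ (n : ℕ) (x : Y), ‖Qop P n x‖ ≤ 2 * ‖x‖ := by
    intro n x
    have : Qop P n x = x - P n x := rfl
    rw [this]
    calc ‖x - P n x‖ ≤ ‖x‖ + ‖P n x‖ := norm_sub_le _ _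
      _ ≤ ‖x‖ + ‖x‖ := by linarith [hPle n x]
      _ = 2 * ‖x‖ := by ring
  constructor
  · intro hA
    by_contra hcon
    rw [Metric.tendsto_atTop] at hcon
    push_neg at hcon
    obtain ⟨ε, hε, hfreq⟩ := hcon
    obtain ⟨φ, hφ, hφε⟩ := Filter.extraction_of_frequently_atTop
      (Filter.frequently_atTop.mpr fun N => by
        obtain ⟨n, hn1, hn2⟩ := hfreq N
        exact ⟨n, hn1, hn2⟩)
    have hφε' : ∀ k, ε ≤ ‖A.comp (Qop P (φ k))‖ := by
      intro k
      have := hφε k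
      rwa [Real.dist_eq, sub_zero, abs_of_nonneg (norm_nonneg _)] at this
    have hx : ∀ k, ∃ x : Y, ‖x‖ < 1 ∧ ε / 2 < ‖(A.comp (Qop P (φ k))) x‖ := by
      intro k
      exact (A.comp (Qop P (φ k))).exists_lt_apply_of_lt_opNorm
        (lt_of_lt_of_le (by linarith) (hφε' k))
    choose x hx1 hx2 using hx
    set y : ℕ → Y := fun k => Qop P (φ k) (x k) with hy
    have hSC : SConv P y 0 := by
      constructor
      · exact ⟨2, fun k => le_trans (hQle _ _) (by nlinarith [hx1 k, norm_nonneg (x k)])⟩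
      · intro m
        obtain ⟨Nm, hNm1, hNm2⟩ := hP2 m
        have hev : ∀ᶠ k in atTop, ‖P m (y k - 0)‖ = 0 := by
          filter_upwards [Filter.eventually_ge_atTop Nm] with k hk
          have hφk : Nm ≤ φ k := le_trans hk (hφ.le_apply)
          have hcomp := (hNm2 (φ k) hφk).2
          have : P m (y k) = P m (x k) - P m (P (φ k) (x k)) := by
            simp [hy, Qop, map_sub]
          have h2 : P m (P (φ k) (x k)) = P m (x k) := by
            have := congrArg (fun T : Y →L[ℂ] Y => T (x k)) hcomp
            simpa using this
          rw [sub_zero, this, h2, sub_self, norm_zero]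
        exact tendsto_const_nhds.congr' (by filter_upwards [hev] with k h; rw [h])
    have := hA y 0 hSC
    rw [map_zero] at this
    have hev : ∀ᶠ k in atTop, ‖A (y k) - 0‖ < ε / 2 :=
      this.eventually (gt_mem_nhds (by linarith))
    obtain ⟨k, hk⟩ := hev.exists
    rw [sub_zero] at hk
    exact absurd hk (not_lt.mpr (le_of_lt (hx2 k)))
  · intro h x x₀ ⟨⟨C, hC⟩, hconv⟩
    have hC0 : 0 ≤ C := le_trans (norm_nonneg _) (hC 0)
    rw [Metric.tendsto_atTop]
    intro ε hε
    obtain ⟨C', hC'⟩ : ∃ C' : ℝ, C' = C + ‖x₀‖ + 1 := ⟨_, rfl⟩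
    have hC'pos : 0 < C' := by rw [hC']; positivity
    have hbd : ∀ j, ‖x j - x₀‖ ≤ C' := fun j =>
      le_trans (norm_sub_le _ _) (by linarith [hC j])
    obtain ⟨n, hn⟩ := (h.eventually (gt_mem_nhds (show ε / (2 * C') > 0 by positivity))).exists
    have hA' : 0 ≤ ‖A‖ := norm_nonneg _
    have := (Metric.tendsto_atTop.mp (hconv n)) (ε / (2 * (‖A‖ + 1)))
      (by positivity)
    obtain ⟨J, hJ⟩ := this
    refine ⟨J, fun j hj => ?_⟩
    have hPj := hJ j hj
    rw [Real.dist_eq, sub_zero, abs_of_nonneg (norm_nonneg _)] at hPj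
    rw [Real.dist_eq, sub_zero, abs_of_nonneg (norm_nonneg _)]
    have hsplit : A (x j) - A x₀ = A (P n (x j - x₀)) + (A.comp (Qop P n)) (x j - x₀) := by
      have : P n (x j - x₀) + Qop P n (x j - x₀) = x j - x₀ := by
        simp [Qop]
      calc A (x j) - A x₀ = A (x j - x₀) := by rw [map_sub]
        _ = A (P n (x j - x₀) + Qop P n (x j - x₀)) := by rw [this]
        _ = A (P n (x j - x₀)) + (A.comp (Qop P n)) (x j - x₀) := by
            rw [map_add]; rfl
    rw [hsplit]
    have h1 : ‖A (P n (x j - x₀))‖ ≤ ‖A‖ * ‖P n (x j - x₀)‖ := A.le_opNorm _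
    have h2 : ‖(A.comp (Qop P n)) (x j - x₀)‖ ≤ ‖A.comp (Qop P n)‖ * C' := by
      calc ‖(A.comp (Qop P n)) (x j - x₀)‖ ≤ ‖A.comp (Qop P n)‖ * ‖x j - x₀‖ :=
            (A.comp (Qop P n)).le_opNorm _
        _ ≤ ‖A.comp (Qop P n)‖ * C' :=
            mul_le_mul_of_nonneg_left (hbd j) (norm_nonneg _)
    have h3 : ‖A‖ * ‖P n (x j - x₀)‖ < ε / 2 := by
      have : ‖A‖ * ‖P n (x j - x₀)‖ ≤ (‖A‖ + 1) * ‖P n (x j - x₀)‖ :=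
        mul_le_mul_of_nonneg_right (by linarith) (norm_nonneg _)
      have h4 : (‖A‖ + 1) * ‖P n (x j - x₀)‖ < (‖A‖ + 1) * (ε / (2 * (‖A‖ + 1))) :=
        mul_lt_mul_of_pos_left hPj (by linarith)
      have h5 : (‖A‖ + 1) * (ε / (2 * (‖A‖ + 1))) = ε / 2 := by
        field_simp
      linarith
    have h6 : ‖A.comp (Qop P n)‖ * C' ≤ ε / 2 := by
      have := mul_le_mul_of_nonneg_right (le_of_lt hn) (le_of_lt hC'pos)
      have h7 : ε / (2 * C') * C' = ε / 2 := by field_simp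
      linarith
    calc ‖A (P n (x j - x₀)) + (A.comp (Qop P n)) (x j - x₀)‖
        ≤ ‖A (P n (x j - x₀))‖ + ‖(A.comp (Qop P n)) (x j - x₀)‖ := norm_add_le _ _
      _ ≤ ‖A‖ * ‖P n (x j - x₀)‖ + ‖A.comp (Qop P n)‖ * C' := add_le_add h1 h2
      _ < ε := by linarith
end

section
/- An operator A ∈ L(Y) belongs to S(Y), i.e. x_j →s x implies A x_j →s A x, if and only if, for every m ∈ ℕ, ‖P_m A Q_n‖ → 0 as n → ∞. -/
open Filter Topology

/-- `A ∈ S(Y)` iff for every `m`, `‖Pₘ A Qₙ‖ → 0` as `n → ∞`. -/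
theorem statement13 {Y : Type*} [NormedAddCommGroup Y] [NormedSpace ℂ Y] [CompleteSpace Y]
    (P : ℕ → Y →L[ℂ] Y) (hP : ApproxId P) (A : Y →L[ℂ] Y) :
    MemS P A ↔ ∀ m : ℕ,
      Tendsto (fun n => ‖(P m).comp (A.comp (Qop P n))‖) atTop (𝓝 0) := by
  have hPle : ∀ n (x : Y), ‖P n x‖ ≤ ‖x‖ := fun n x => (hP.1 x).1 ⟨n, rfl⟩
  constructor
  · intro hA m
    by_contra hcon
    rw [Metric.tendsto_atTop] at hcon
    push_neg at hcon
    obtain ⟨ε, hε, hfreq⟩ := hcon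
    choose φ hφ1 hφ2 using hfreq
    have hε2 : ∀ N, ε / 2 < ‖(P m).comp (A.comp (Qop P (φ N)))‖ := by
      intro N
      have h1 := hφ2 N
      rw [Real.dist_eq, sub_zero, abs_of_nonneg (norm_nonneg _)] at h1
      linarith
    have hx : ∀ N, ∃ x : Y, ‖x‖ < 1 ∧ ε / 2 < ‖((P m).comp (A.comp (Qop P (φ N)))) x‖ :=
      fun N => ContinuousLinearMap.exists_lt_apply_of_lt_opNorm _ (hε2 N)
    choose x hx1 hx2 using hx
    set z : ℕ → Y := fun k => Qop P (φ k) (x k) with hz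
    have hzb : ∀ k, ‖z k‖ ≤ 2 := by
      intro k
      have hzeq : z k = x k - P (φ k) (x k) := rfl
      rw [hzeq]
      have h1 := hPle (φ k) (x k)
      have h2 := (hx1 k).le
      calc ‖x k - P (φ k) (x k)‖ ≤ ‖x k‖ + ‖P (φ k) (x k)‖ := norm_sub_le _ _
        _ ≤ 2 := by linarith
    have hsz : SConv P z 0 := by
      refine ⟨⟨2, hzb⟩, ?_⟩
      intro m'
      obtain ⟨Nm, hNm, hcomm⟩ := hP.2 m'
      apply Tendsto.congr' _ (tendsto_const_nhds (x := (0 : ℝ)))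
      filter_upwards [eventually_ge_atTop Nm] with k hk
      have hk' : Nm ≤ φ k := le_trans hk (hφ1 k)
      have hc := (hcomm (φ k) hk').2
      have happ : P m' (P (φ k) (x k)) = P m' (x k) :=
        ContinuousLinearMap.ext_iff.mp hc (x k)
      have : P m' (z k - 0) = 0 := by
        simp only [sub_zero, hz, Qop, ContinuousLinearMap.sub_apply,
          ContinuousLinearMap.id_apply, map_sub, happ, sub_self]
      rw [this, norm_zero]
    have hAz := hA z 0 hsz
    have h2 := hAz.2 m
    have heq : ∀ k, ‖P m (A (z k) - A 0)‖ = ‖((P m).comp (A.comp (Qop P (φ k)))) (x k)‖ := by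
      intro k
      simp only [map_zero, sub_zero, hz, ContinuousLinearMap.comp_apply]
    rw [Metric.tendsto_atTop] at h2
    obtain ⟨N, hN⟩ := h2 (ε / 2) (by linarith)
    have hNN := hN N le_rfl
    rw [Real.dist_eq, sub_zero, abs_of_nonneg (norm_nonneg _), heq N] at hNN
    exact absurd hNN (not_lt.mpr (hx2 N).le)
  · rintro h x x₀ ⟨⟨C, hC⟩, hconv⟩
    have hC0 : (0 : ℝ) ≤ C := le_trans (norm_nonneg _) (hC 0)
    refine ⟨⟨‖A‖ * C, fun j =>
      le_trans (A.le_opNorm _) (mul_le_mul_of_nonneg_left (hC j) (norm_nonneg A))⟩, ?_⟩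
    intro m
    rw [Metric.tendsto_atTop]
    intro ε hε
    set D := C + ‖x₀‖ with hD
    have hD0 : (0 : ℝ) ≤ D := by positivity
    have hxd : ∀ j, ‖x j - x₀‖ ≤ D := by
      intro j
      calc ‖x j - x₀‖ ≤ ‖x j‖ + ‖x₀‖ := norm_sub_le _ _
        _ ≤ D := by rw [hD]; linarith [hC j]
    set ε' := ε / (2 * (D + 1)) with hε'
    have hε'0 : 0 < ε' := by positivity
    have hm := h m
    rw [Metric.tendsto_atTop] at hm
    obtain ⟨n, hn⟩ := hm ε' hε'0
    have hn' : ‖(P m).comp (A.comp (Qop P n))‖ < ε' := by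
      have := hn n le_rfl
      rwa [Real.dist_eq, sub_zero, abs_of_nonneg (norm_nonneg _)] at this
    set B := (P m).comp A with hB
    set ε'' := ε / (4 * (‖B‖ + 1)) with hε''
    have hB0 : (0 : ℝ) ≤ ‖B‖ := norm_nonneg _
    have hε''0 : 0 < ε'' := by positivity
    have hcm := hconv n
    rw [Metric.tendsto_atTop] at hcm
    obtain ⟨J, hJ⟩ := hcm ε'' hε''0
    refine ⟨J, fun j hj => ?_⟩
    have hJj : ‖P n (x j - x₀)‖ < ε'' := by
      have := hJ j hj
      rwa [Real.dist_eq, sub_zero, abs_of_nonneg (norm_nonneg _)] at this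
    have hdecomp : P m (A (x j) - A x₀) =
        B (P n (x j - x₀)) + ((P m).comp (A.comp (Qop P n))) (x j - x₀) := by
      rw [← map_sub A]
      simp only [hB, Qop, ContinuousLinearMap.comp_apply, ContinuousLinearMap.sub_apply,
        ContinuousLinearMap.id_apply, map_sub]
      abel
    rw [Real.dist_eq, sub_zero, abs_of_nonneg (norm_nonneg _), hdecomp]
    have hbd : ‖B (P n (x j - x₀)) + ((P m).comp (A.comp (Qop P n))) (x j - x₀)‖ ≤
        ‖B‖ * ‖P n (x j - x₀)‖ + ‖(P m).comp (A.comp (Qop P n))‖ * ‖x j - x₀‖ := by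
      calc ‖B (P n (x j - x₀)) + ((P m).comp (A.comp (Qop P n))) (x j - x₀)‖
          ≤ ‖B (P n (x j - x₀))‖ + ‖((P m).comp (A.comp (Qop P n))) (x j - x₀)‖ :=
            norm_add_le _ _
        _ ≤ ‖B‖ * ‖P n (x j - x₀)‖ + ‖(P m).comp (A.comp (Qop P n))‖ * ‖x j - x₀‖ := by
            gcongr <;> [exact B.le_opNorm _; exact ContinuousLinearMap.le_opNorm _ _]
    have ht1 : ‖B‖ * ‖P n (x j - x₀)‖ ≤ ‖B‖ * ε'' := by
      exact mul_le_mul_of_nonneg_left hJj.le hB0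
    have ht1' : ‖B‖ * ε'' < ε / 2 := by
      rw [hε'', mul_comm, div_mul_eq_mul_div, div_lt_div_iff₀ (by positivity) (by norm_num)]
      nlinarith
    have ht2 : ‖(P m).comp (A.comp (Qop P n))‖ * ‖x j - x₀‖ ≤ ε' * D := by
      exact mul_le_mul hn'.le (hxd j) (norm_nonneg _) hε'0.le
    have ht2' : ε' * D < ε / 2 := by
      rw [hε']
      rw [div_mul_eq_mul_div, div_lt_div_iff₀ (by positivity) (by norm_num)]
      nlinarith
    clear_value D ε' B ε''
    linarith [hbd]
end

section
/- An operator A ∈ L(Y) belongs to L(Y,P) if and only if, for every m ∈ ℕ, both ‖P_m A Q_n‖ → 0 and ‖Q_n A P_m‖ → 0 as n → ∞. -/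
open Filter Topology

private lemma tendsto_of_eps (f : ℕ → ℝ) (h0 : ∀ n, 0 ≤ f n)
    (h : ∀ ε : ℝ, 0 < ε → ∃ N, ∀ n ≥ N, f n < ε) : Tendsto f atTop (𝓝 0) := by
  rw [Metric.tendsto_atTop]
  intro ε hε
  obtain ⟨N, hN⟩ := h ε hε
  exact ⟨N, fun n hn => by
    rw [Real.dist_eq, sub_zero, abs_of_nonneg (h0 n)]; exact hN n hn⟩

/-- `A ∈ L(Y,P)` iff for every `m`, both `‖Pₘ A Qₙ‖ → 0` and
`‖Qₙ A Pₘ‖ → 0` as `n → ∞`. -/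
theorem statement14 {Y : Type*} [NormedAddCommGroup Y] [NormedSpace ℂ Y] [CompleteSpace Y]
    (P : ℕ → Y →L[ℂ] Y) (hP : ApproxId P) (A : Y →L[ℂ] Y) :
    MemLP P A ↔ ∀ m : ℕ,
      Tendsto (fun n => ‖(P m).comp (A.comp (Qop P n))‖) atTop (𝓝 0) ∧
      Tendsto (fun n => ‖(Qop P n).comp (A.comp (P m))‖) atTop (𝓝 0) := by
  classical
  have hnorm : ∀ (n : ℕ) (x : Y), ‖P n x‖ ≤ ‖x‖ := fun n x =>
    (hP.1 x).1 ⟨n, rfl⟩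
  have hPle : ∀ n, ‖P n‖ ≤ 1 := fun n =>
    ContinuousLinearMap.opNorm_le_bound _ zero_le_one
      (fun x => by simpa using hnorm n x)
  have hQle : ∀ n, ‖Qop P n‖ ≤ 2 := fun n =>
    ContinuousLinearMap.opNorm_le_bound _ (by norm_num) (fun x => by
      have : ‖x - P n x‖ ≤ ‖x‖ + ‖P n x‖ := norm_sub_le _ _
      have h2 := hnorm n x
      simp only [Qop, ContinuousLinearMap.sub_apply, ContinuousLinearMap.id_apply]
      linarith)
  -- each P m is in K(Y,P)
  have hPmem : ∀ m, MemKP P (P m) := by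
    intro m
    obtain ⟨Nm, -, hNm⟩ := hP.2 m
    constructor
    · refine tendsto_const_nhds.congr' ?_
      filter_upwards [Filter.eventually_atTop.2 ⟨Nm, fun n hn => (hNm n hn).2⟩] with n hn
      have : (P m).comp (Qop P n) = 0 := by
        simp only [Qop, ContinuousLinearMap.comp_sub, ContinuousLinearMap.comp_id, hn]
        simp
      rw [this, norm_zero]
    · refine tendsto_const_nhds.congr' ?_
      filter_upwards [Filter.eventually_atTop.2 ⟨Nm, fun n hn => (hNm n hn).1⟩] with n hn
      have : (Qop P n).comp (P m) = 0 := by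
        simp only [Qop, ContinuousLinearMap.sub_comp, ContinuousLinearMap.id_comp, hn]
        simp
      rw [this, norm_zero]
  constructor
  · intro hA m
    obtain ⟨h1, h2⟩ := hA (P m) (hPmem m)
    constructor
    · have := h2.1
      simpa only [ContinuousLinearMap.comp_assoc] using this
    · exact h1.2
  · intro h K hK
    have hKAQ : Tendsto (fun n => ‖(A.comp K).comp (Qop P n)‖) atTop (𝓝 0) := by
      have hb : Tendsto (fun n => ‖A‖ * ‖K.comp (Qop P n)‖) atTop (𝓝 0) := by
        simpa using hK.1.const_mul ‖A‖
      refine squeeze_zero (fun n => norm_nonneg _) (fun n => ?_) hb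
      rw [ContinuousLinearMap.comp_assoc]
      exact ContinuousLinearMap.opNorm_comp_le _ _
    have hQKA : Tendsto (fun n => ‖(Qop P n).comp (K.comp A)‖) atTop (𝓝 0) := by
      have hb : Tendsto (fun n => ‖(Qop P n).comp K‖ * ‖A‖) atTop (𝓝 0) := by
        simpa using hK.2.mul_const ‖A‖
      refine squeeze_zero (fun n => norm_nonneg _) (fun n => ?_) hb
      rw [← ContinuousLinearMap.comp_assoc]
      exact ContinuousLinearMap.opNorm_comp_le _ _
    have hdecomp : ∀ m : ℕ, (P m).comp K + (Qop P m).comp K = K := by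
      intro m
      ext x
      simp [Qop, ContinuousLinearMap.comp_apply]
    have hdecomp' : ∀ m : ℕ, ∀ B : Y →L[ℂ] Y, K.comp ((P m).comp B) + (K.comp (Qop P m)).comp B = K.comp B := by
      intro m B
      ext x
      simp [Qop, ContinuousLinearMap.comp_apply]
    refine ⟨⟨hKAQ, ?_⟩, ⟨?_, hQKA⟩⟩
    · -- ‖Q_n A K‖ → 0
      refine tendsto_of_eps _ (fun n => norm_nonneg _) (fun ε hε => ?_)
      set C : ℝ := ‖K‖ + 2 * ‖A‖ + 1 with hC
      have hCpos : 0 < C := by positivity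
      have hδ : 0 < ε / C := div_pos hε hCpos
      obtain ⟨m, hm⟩ := (Metric.tendsto_atTop.1 hK.2) (ε / C) hδ
      have hmK : ‖(Qop P m).comp K‖ < ε / C := by
        have := hm m le_rfl
        rwa [Real.dist_eq, sub_zero, abs_of_nonneg (norm_nonneg _)] at this
      obtain ⟨N, hN⟩ := (Metric.tendsto_atTop.1 (h m).2) (ε / C) hδ
      refine ⟨N, fun n hn => ?_⟩
      have hnm : ‖(Qop P n).comp (A.comp (P m))‖ < ε / C := by
        have := hN n hn
        rwa [Real.dist_eq, sub_zero, abs_of_nonneg (norm_nonneg _)] at this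
      have heq : (Qop P n).comp (A.comp K)
          = ((Qop P n).comp (A.comp (P m))).comp K
            + ((Qop P n).comp A).comp ((Qop P m).comp K) := by
        ext x
        simp [Qop, ContinuousLinearMap.comp_apply, map_sub]
      have hb1 : ‖((Qop P n).comp (A.comp (P m))).comp K‖
          ≤ ‖(Qop P n).comp (A.comp (P m))‖ * ‖K‖ :=
        ContinuousLinearMap.opNorm_comp_le _ _
      have hb2 : ‖((Qop P n).comp A).comp ((Qop P m).comp K)‖
          ≤ 2 * ‖A‖ * ‖(Qop P m).comp K‖ := by
        calc ‖((Qop P n).comp A).comp ((Qop P m).comp K)‖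
            ≤ ‖(Qop P n).comp A‖ * ‖(Qop P m).comp K‖ :=
              ContinuousLinearMap.opNorm_comp_le _ _
          _ ≤ 2 * ‖A‖ * ‖(Qop P m).comp K‖ := by
              apply mul_le_mul_of_nonneg_right _ (norm_nonneg _)
              calc ‖(Qop P n).comp A‖ ≤ ‖Qop P n‖ * ‖A‖ :=
                    ContinuousLinearMap.opNorm_comp_le _ _
                _ ≤ 2 * ‖A‖ := mul_le_mul_of_nonneg_right (hQle n) (norm_nonneg _)
      have key : ‖(Qop P n).comp (A.comp K)‖
          ≤ ‖(Qop P n).comp (A.comp (P m))‖ * ‖K‖ + 2 * ‖A‖ * ‖(Qop P m).comp K‖ := by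
        rw [heq]
        exact le_trans (norm_add_le _ _) (add_le_add hb1 hb2)
      have hεC : ε / C * C = ε := div_mul_cancel₀ ε (ne_of_gt hCpos)
      have hfin : ‖(Qop P n).comp (A.comp (P m))‖ * ‖K‖ + 2 * ‖A‖ * ‖(Qop P m).comp K‖
          < ε := by
        have h1 : ‖(Qop P n).comp (A.comp (P m))‖ * ‖K‖ ≤ ε / C * ‖K‖ :=
          mul_le_mul_of_nonneg_right hnm.le (norm_nonneg _)
        have h2 : 2 * ‖A‖ * ‖(Qop P m).comp K‖ ≤ 2 * ‖A‖ * (ε / C) :=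
          mul_le_mul_of_nonneg_left hmK.le (by positivity)
        have : ε / C * ‖K‖ + 2 * ‖A‖ * (ε / C) < ε / C * C := by
          rw [hC]; nlinarith
        linarith [hεC ▸ this]
      linarith
    · -- ‖K A Q_n‖ → 0
      refine tendsto_of_eps _ (fun n => norm_nonneg _) (fun ε hε => ?_)
      set C : ℝ := ‖K‖ + 2 * ‖A‖ + 1 with hC
      have hCpos : 0 < C := by positivity
      have hδ : 0 < ε / C := div_pos hε hCpos
      obtain ⟨m, hm⟩ := (Metric.tendsto_atTop.1 hK.1) (ε / C) hδ
      have hmK : ‖K.comp (Qop P m)‖ < ε / C := by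
        have := hm m le_rfl
        rwa [Real.dist_eq, sub_zero, abs_of_nonneg (norm_nonneg _)] at this
      obtain ⟨N, hN⟩ := (Metric.tendsto_atTop.1 (h m).1) (ε / C) hδ
      refine ⟨N, fun n hn => ?_⟩
      have hnm : ‖(P m).comp (A.comp (Qop P n))‖ < ε / C := by
        have := hN n hn
        rwa [Real.dist_eq, sub_zero, abs_of_nonneg (norm_nonneg _)] at this
      have heq : (K.comp A).comp (Qop P n)
          = K.comp ((P m).comp (A.comp (Qop P n)))
            + (K.comp (Qop P m)).comp (A.comp (Qop P n)) := by
        rw [ContinuousLinearMap.comp_assoc]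
        exact (hdecomp' m (A.comp (Qop P n))).symm
      have hb1 : ‖K.comp ((P m).comp (A.comp (Qop P n)))‖
          ≤ ‖K‖ * ‖(P m).comp (A.comp (Qop P n))‖ :=
        ContinuousLinearMap.opNorm_comp_le _ _
      have hb2 : ‖(K.comp (Qop P m)).comp (A.comp (Qop P n))‖
          ≤ ‖K.comp (Qop P m)‖ * (2 * ‖A‖) := by
        calc ‖(K.comp (Qop P m)).comp (A.comp (Qop P n))‖
            ≤ ‖K.comp (Qop P m)‖ * ‖A.comp (Qop P n)‖ :=
              ContinuousLinearMap.opNorm_comp_le _ _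
          _ ≤ ‖K.comp (Qop P m)‖ * (2 * ‖A‖) := by
              apply mul_le_mul_of_nonneg_left _ (norm_nonneg _)
              calc ‖A.comp (Qop P n)‖ ≤ ‖A‖ * ‖Qop P n‖ :=
                    ContinuousLinearMap.opNorm_comp_le _ _
                _ ≤ 2 * ‖A‖ := by nlinarith [hQle n, norm_nonneg A]
      have key : ‖(K.comp A).comp (Qop P n)‖
          ≤ ‖K‖ * ‖(P m).comp (A.comp (Qop P n))‖ + ‖K.comp (Qop P m)‖ * (2 * ‖A‖) := by
        rw [heq]
        exact le_trans (norm_add_le _ _) (add_le_add hb1 hb2)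
      have hεC : ε / C * C = ε := div_mul_cancel₀ ε (ne_of_gt hCpos)
      have hfin : ‖K‖ * ‖(P m).comp (A.comp (Qop P n))‖ + ‖K.comp (Qop P m)‖ * (2 * ‖A‖)
          < ε := by
        have h1 : ‖K‖ * ‖(P m).comp (A.comp (Qop P n))‖ ≤ ‖K‖ * (ε / C) :=
          mul_le_mul_of_nonneg_left hnm.le (norm_nonneg _)
        have h2 : ‖K.comp (Qop P m)‖ * (2 * ‖A‖) ≤ ε / C * (2 * ‖A‖) :=
          mul_le_mul_of_nonneg_right hmK.le (by positivity)
        have : ‖K‖ * (ε / C) + ε / C * (2 * ‖A‖) < ε / C * C := by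
          rw [hC]; nlinarith
        linarith [hεC ▸ this]
      linarith
end

section
/- Let (A_n) be a sequence in L(Y) and A ∈ L(Y). Then A_n P-converges to A, i.e. ‖(A_n − A) K‖ → 0 and ‖K (A_n − A)‖ → 0 as n → ∞ for every K ∈ K(Y,P), if and only if sup_n ‖A_n‖ < ∞ and, for every m ∈ ℕ, ‖(A_n − A) P_m‖ → 0 and ‖P_m (A_n − A)‖ → 0 as n → ∞. -/
open Filter Topology

section helpers

variable {Y : Type*} [NormedAddCommGroup Y] [NormedSpace ℂ Y]

lemma tendsto_norm_zero_iff' {f : ℕ → ℝ} (hf : ∀ n, 0 ≤ f n) :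
    Tendsto f atTop (𝓝 0) ↔ ∀ ε > 0, ∃ N, ∀ n ≥ N, f n < ε := by
  rw [Metric.tendsto_atTop]
  constructor
  · intro h ε hε
    obtain ⟨N, hN⟩ := h ε hε
    exact ⟨N, fun n hn => by
      have := hN n hn
      rwa [Real.dist_eq, sub_zero, abs_of_nonneg (hf n)] at this⟩
  · intro h ε hε
    obtain ⟨N, hN⟩ := h ε hε
    exact ⟨N, fun n hn => by
      rw [Real.dist_eq, sub_zero, abs_of_nonneg (hf n)]; exact hN n hn⟩

lemma apxP_opNorm_le {P : ℕ → Y →L[ℂ] Y} (hP : ApproxId P) (m : ℕ) : ‖P m‖ ≤ 1 :=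
  ContinuousLinearMap.opNorm_le_bound _ zero_le_one fun x => by
    simpa using (hP.1 x).1 ⟨m, rfl⟩

lemma apxQ_opNorm_le {P : ℕ → Y →L[ℂ] Y} (hP : ApproxId P) (n : ℕ) : ‖Qop P n‖ ≤ 2 := by
  rw [Qop]
  refine (norm_sub_le _ _).trans ?_
  have h1 : ‖ContinuousLinearMap.id ℂ Y‖ ≤ 1 := ContinuousLinearMap.norm_id_le
  have h2 := apxP_opNorm_le hP n
  linarith

lemma memKP_zero {P : ℕ → Y →L[ℂ] Y} : MemKP P (0 : Y →L[ℂ] Y) := by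
  constructor <;>
    simp only [ContinuousLinearMap.zero_comp, ContinuousLinearMap.comp_zero, norm_zero] <;>
    exact tendsto_const_nhds

lemma memKP_add {P : ℕ → Y →L[ℂ] Y} {K₁ K₂ : Y →L[ℂ] Y}
    (h₁ : MemKP P K₁) (h₂ : MemKP P K₂) : MemKP P (K₁ + K₂) := by
  constructor
  · refine squeeze_zero (fun n => norm_nonneg _) (fun n => ?_) (by simpa using h₁.1.add h₂.1)
    rw [ContinuousLinearMap.add_comp]; exact norm_add_le _ _
  · refine squeeze_zero (fun n => norm_nonneg _) (fun n => ?_) (by simpa using h₁.2.add h₂.2)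
    rw [ContinuousLinearMap.comp_add]; exact norm_add_le _ _

lemma memKP_smul {P : ℕ → Y →L[ℂ] Y} (r : ℝ) {K : Y →L[ℂ] Y}
    (h : MemKP P K) : MemKP P (r • K) := by
  have h1 := h.1.const_mul ‖r‖
  have h2 := h.2.const_mul ‖r‖
  rw [mul_zero] at h1 h2
  constructor
  · refine squeeze_zero (fun n => norm_nonneg _) (fun n => ?_) h1
    rw [ContinuousLinearMap.smul_comp]
    exact le_of_eq (norm_smul r (K.comp (Qop P n)))
  · refine squeeze_zero (fun n => norm_nonneg _) (fun n => ?_) h2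
    rw [ContinuousLinearMap.comp_smul]
    exact le_of_eq (norm_smul r ((Qop P n).comp K))

lemma memKP_P {P : ℕ → Y →L[ℂ] Y} (hP : ApproxId P) (m : ℕ) : MemKP P (P m) := by
  obtain ⟨Nm, -, h⟩ := hP.2 m
  constructor
  · refine Tendsto.congr' ?_ (tendsto_const_nhds (x := (0:ℝ)))
    filter_upwards [eventually_ge_atTop Nm] with n hn
    have : (P m).comp (Qop P n) = 0 := by
      rw [Qop, ContinuousLinearMap.comp_sub, ContinuousLinearMap.comp_id, (h n hn).2, sub_self]
    rw [this, norm_zero]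
  · refine Tendsto.congr' ?_ (tendsto_const_nhds (x := (0:ℝ)))
    filter_upwards [eventually_ge_atTop Nm] with n hn
    have : (Qop P n).comp (P m) = 0 := by
      rw [Qop, ContinuousLinearMap.sub_comp, ContinuousLinearMap.id_comp, (h n hn).1, sub_self]
    rw [this, norm_zero]

lemma memKP_limit {P : ℕ → Y →L[ℂ] Y} (hP : ApproxId P) {Kseq : ℕ → Y →L[ℂ] Y}
    {K : Y →L[ℂ] Y} (hs : ∀ j, MemKP P (Kseq j))
    (hlim : Tendsto (fun j => ‖K - Kseq j‖) atTop (𝓝 0)) : MemKP P K := by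
  rw [tendsto_norm_zero_iff' (fun j => norm_nonneg _)] at hlim
  constructor
  · rw [tendsto_norm_zero_iff' (fun n => norm_nonneg _)]
    intro ε hε
    obtain ⟨J, hJ⟩ := hlim (ε/3) (by linarith)
    have hj := hJ J le_rfl
    obtain ⟨N, hN⟩ := (tendsto_norm_zero_iff' (fun n => norm_nonneg _)).mp (hs J).1 (ε/3) (by linarith)
    refine ⟨N, fun n hn => ?_⟩
    have e : K.comp (Qop P n) = (K - Kseq J).comp (Qop P n) + (Kseq J).comp (Qop P n) := by
      rw [ContinuousLinearMap.sub_comp]; abel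
    calc ‖K.comp (Qop P n)‖ ≤ ‖(K - Kseq J).comp (Qop P n)‖ + ‖(Kseq J).comp (Qop P n)‖ := by
          rw [e]; exact norm_add_le _ _
      _ ≤ ‖K - Kseq J‖ * ‖Qop P n‖ + ‖(Kseq J).comp (Qop P n)‖ := by
          gcongr; exact ContinuousLinearMap.opNorm_comp_le _ _
      _ ≤ ‖K - Kseq J‖ * 2 + ‖(Kseq J).comp (Qop P n)‖ := by
          gcongr; exact apxQ_opNorm_le hP n
      _ < (ε/3) * 2 + ε/3 := by
          have := hN n hn
          gcongr
      _ ≤ ε := by linarith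
  · rw [tendsto_norm_zero_iff' (fun n => norm_nonneg _)]
    intro ε hε
    obtain ⟨J, hJ⟩ := hlim (ε/3) (by linarith)
    have hj := hJ J le_rfl
    obtain ⟨N, hN⟩ := (tendsto_norm_zero_iff' (fun n => norm_nonneg _)).mp (hs J).2 (ε/3) (by linarith)
    refine ⟨N, fun n hn => ?_⟩
    have e : (Qop P n).comp K = (Qop P n).comp (K - Kseq J) + (Qop P n).comp (Kseq J) := by
      rw [ContinuousLinearMap.comp_sub]; abel
    calc ‖(Qop P n).comp K‖ ≤ ‖(Qop P n).comp (K - Kseq J)‖ + ‖(Qop P n).comp (Kseq J)‖ := by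
          rw [e]; exact norm_add_le _ _
      _ ≤ ‖Qop P n‖ * ‖K - Kseq J‖ + ‖(Qop P n).comp (Kseq J)‖ := by
          gcongr; exact ContinuousLinearMap.opNorm_comp_le _ _
      _ ≤ 2 * ‖K - Kseq J‖ + ‖(Qop P n).comp (Kseq J)‖ := by
          gcongr; exact apxQ_opNorm_le hP n
      _ < 2 * (ε/3) + ε/3 := by
          have := hN n hn
          gcongr
      _ ≤ ε := by linarith

lemma exists_Pm_half {P : ℕ → Y →L[ℂ] Y} (hP : ApproxId P) (T : Y →L[ℂ] Y)
    (hT : 0 < ‖T‖) : ∃ m, ‖T‖/2 ≤ ‖(P m).comp T‖ := by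
  obtain ⟨x, hx1, hx2⟩ := T.exists_lt_apply_of_lt_opNorm (show ‖T‖/2 < ‖T‖ by linarith)
  have hlub := hP.1 (T x)
  have hm : ∃ m, ‖T‖/2 < ‖P m (T x)‖ := by
    by_contra h
    push_neg at h
    have : ‖T x‖ ≤ ‖T‖/2 := hlub.2 (by rintro y ⟨m, rfl⟩; exact h m)
    linarith
  obtain ⟨m, hm⟩ := hm
  refine ⟨m, ?_⟩
  have h1 : ‖((P m).comp T) x‖ ≤ ‖(P m).comp T‖ * ‖x‖ := ContinuousLinearMap.le_opNorm _ _
  rw [ContinuousLinearMap.comp_apply] at h1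
  nlinarith [norm_nonneg ((P m).comp T), norm_nonneg x]

end helpers

set_option maxHeartbeats 2000000 in
/-- `Aₙ` P-converges to `A` iff `(Aₙ)` is bounded and
`‖(Aₙ - A) Pₘ‖ → 0`, `‖Pₘ (Aₙ - A)‖ → 0` for every `m`. -/
theorem statement16 {Y : Type*} [NormedAddCommGroup Y] [NormedSpace ℂ Y] [CompleteSpace Y]
    (P : ℕ → Y →L[ℂ] Y) (hP : ApproxId P)
    (Aseq : ℕ → Y →L[ℂ] Y) (A : Y →L[ℂ] Y) :
    (∀ K : Y →L[ℂ] Y, MemKP P K →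
      Tendsto (fun n => ‖(Aseq n - A).comp K‖) atTop (𝓝 0) ∧
      Tendsto (fun n => ‖K.comp (Aseq n - A)‖) atTop (𝓝 0)) ↔
    ((∃ C : ℝ, ∀ n, ‖Aseq n‖ ≤ C) ∧
      ∀ m : ℕ,
        Tendsto (fun n => ‖(Aseq n - A).comp (P m)‖) atTop (𝓝 0) ∧
        Tendsto (fun n => ‖(P m).comp (Aseq n - A)‖) atTop (𝓝 0)) := by
  constructor
  · intro hyp
    refine ⟨?_, fun m => hyp (P m) (memKP_P hP m)⟩
    by_contra hCb
    push_neg at hCb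
    set B : ℕ → Y →L[ℂ] Y := fun n => Aseq n - A with hB
    have hPmB : ∀ m, Tendsto (fun n => ‖(P m).comp (B n)‖) atTop (𝓝 0) :=
      fun m => (hyp (P m) (memKP_P hP m)).2
    -- arbitrarily large norms at arbitrarily large indices
    have hBbig : ∀ (C : ℝ) (N : ℕ), ∃ n, N ≤ n ∧ C ≤ ‖B n‖ := by
      intro C N
      set M : ℝ := (Finset.range (N+1)).sup' (by simp) (fun i => ‖Aseq i‖) with hM
      obtain ⟨n, hn⟩ := hCb (max (C + ‖A‖) M)
      have hnN : N ≤ n := by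
        by_contra hlt
        push_neg at hlt
        have : ‖Aseq n‖ ≤ M := Finset.le_sup' (fun i => ‖Aseq i‖)
          (Finset.mem_range.mpr (by omega))
        have := le_max_right (C + ‖A‖) M
        linarith
      refine ⟨n, hnN, ?_⟩
      have h1 : ‖Aseq n‖ - ‖A‖ ≤ ‖Aseq n - A‖ := norm_sub_norm_le _ _
      have h2 := le_max_left (C + ‖A‖) M
      have : C + ‖A‖ ≤ ‖Aseq n‖ := by linarith
      simpa [hB] using by linarith [h1, this]
    -- the inductive step
    have step : ∀ (k t : ℕ), ∃ q : ℕ × ℕ × ℕ,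
        (t ≤ q.1 ∧ k ≤ q.1) ∧ 14 * 8^k ≤ ‖B q.1‖ ∧
        ‖B q.1‖/2 ≤ ‖(P q.2.1).comp (B q.1)‖ ∧ t ≤ q.2.2 ∧
        ∀ n, q.2.2 ≤ n → ‖(P q.2.1).comp (B n)‖ ≤ 1 := by
      intro k t
      obtain ⟨n, hn1, hn2⟩ := hBbig (14 * 8^k) (max t k)
      have hpos : 0 < ‖B n‖ :=
        lt_of_lt_of_le (by positivity) hn2
      obtain ⟨m, hm⟩ := exists_Pm_half hP (B n) hpos
      obtain ⟨N, hN⟩ := (tendsto_norm_zero_iff' (fun j => norm_nonneg _)).mp (hPmB m) 1 one_pos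
      refine ⟨⟨n, m, max t N⟩, ⟨le_trans (le_max_left _ _) hn1, le_trans (le_max_right _ _) hn1⟩,
        hn2, hm, le_max_left _ _, fun j hj => le_of_lt (hN j (le_trans (le_max_right _ _) hj))⟩
    -- construct the sequences by recursion
    have hex : ∃ f : ℕ → ℕ × ℕ × ℕ,
        ((0 ≤ (f 0).1 ∧ 0 ≤ (f 0).1) ∧ 14 * 8^0 ≤ ‖B (f 0).1‖ ∧
          ‖B (f 0).1‖/2 ≤ ‖(P (f 0).2.1).comp (B (f 0).1)‖ ∧ 0 ≤ (f 0).2.2 ∧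
          ∀ n, (f 0).2.2 ≤ n → ‖(P (f 0).2.1).comp (B n)‖ ≤ 1) ∧
        ∀ k, ((f k).2.2 ≤ (f (k+1)).1 ∧ (k+1) ≤ (f (k+1)).1) ∧
          14 * 8^(k+1) ≤ ‖B (f (k+1)).1‖ ∧
          ‖B (f (k+1)).1‖/2 ≤ ‖(P (f (k+1)).2.1).comp (B (f (k+1)).1)‖ ∧
          (f k).2.2 ≤ (f (k+1)).2.2 ∧
          ∀ n, (f (k+1)).2.2 ≤ n → ‖(P (f (k+1)).2.1).comp (B n)‖ ≤ 1 := by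
      refine ⟨fun k => Nat.rec (Classical.choose (step 0 0))
        (fun k ih => Classical.choose (step (k+1) ih.2.2)) k, ?_, ?_⟩
      · exact Classical.choose_spec (step 0 0)
      · intro k
        exact Classical.choose_spec (step (k+1) _)
    obtain ⟨f, hf0, hfs⟩ := hex
    set nn : ℕ → ℕ := fun k => (f k).1 with hnn
    set mm : ℕ → ℕ := fun k => (f k).2.1 with hmm
    set tt : ℕ → ℕ := fun k => (f k).2.2 with htt
    have hk_le : ∀ k, k ≤ nn k := by
      intro k; cases k with
      | zero => exact Nat.zero_le _
      | succ k => exact (hfs k).1.2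
    have hbig : ∀ k, 14 * 8^k ≤ ‖B (nn k)‖ := by
      intro k; cases k with
      | zero => exact hf0.2.1
      | succ k => exact (hfs k).2.1
    have hhalf : ∀ k, ‖B (nn k)‖/2 ≤ ‖(P (mm k)).comp (B (nn k))‖ := by
      intro k; cases k with
      | zero => exact hf0.2.2.1
      | succ k => exact (hfs k).2.2.1
    have hthr : ∀ k n, tt k ≤ n → ‖(P (mm k)).comp (B n)‖ ≤ 1 := by
      intro k; cases k with
      | zero => exact hf0.2.2.2.2
      | succ k => exact (hfs k).2.2.2.2
    have htmono : Monotone tt := monotone_nat_of_le_succ (fun k => (hfs k).2.2.2.1)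
    have hnt : ∀ k, tt k ≤ nn (k+1) := fun k => (hfs k).1.1
    have hsmall : ∀ j k, j < k → ‖(P (mm j)).comp (B (nn k))‖ ≤ 1 := by
      intro j k hjk
      cases k with
      | zero => omega
      | succ k => exact hthr j _ (le_trans (htmono (by omega : j ≤ k)) (hnt k))
    -- the compact-like operator K
    set g : ℕ → (Y →L[ℂ] Y) := fun j => ((1/8:ℝ)^j) • P (mm j) with hg
    have hgnorm : ∀ j, ‖g j‖ ≤ (1/8:ℝ)^j := by
      intro j
      show ‖((1/8:ℝ)^j) • P (mm j)‖ ≤ _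
      have h : ‖((1/8:ℝ)^j) • P (mm j)‖ = ‖(1/8:ℝ)^j‖ * ‖P (mm j)‖ :=
        norm_smul ((1/8:ℝ)^j) (P (mm j))
      rw [h, Real.norm_eq_abs, abs_of_nonneg (by positivity)]
      nlinarith [apxP_opNorm_le hP (mm j), pow_nonneg (by norm_num : (0:ℝ) ≤ 1/8) j]
    have hgeom : Summable (fun j => (1/8:ℝ)^j) :=
      summable_geometric_of_lt_one (by norm_num) (by norm_num)
    have hsum : Summable g := Summable.of_norm_bounded hgeom hgnorm
    set K : Y →L[ℂ] Y := ∑' j, g j with hK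
    set S : ℕ → (Y →L[ℂ] Y) := fun N => ∑ j ∈ Finset.range N, g j with hS
    have htail : ∀ N, ‖K - S N‖ ≤ (8/7) * (1/8:ℝ)^N := by
      intro N
      have h1 : S N + ∑' i, g (i + N) = K := hsum.sum_add_tsum_nat_add N
      have h2 : K - S N = ∑' i, g (i + N) := by rw [← h1]; abel
      have hsh : Summable (fun i => (1/8:ℝ)^(i+N)) := (summable_nat_add_iff N).2 hgeom
      have hsn : Summable (fun i => ‖g (i+N)‖) :=
        Summable.of_nonneg_of_le (fun i => norm_nonneg _) (fun i => hgnorm _) hsh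
      rw [h2]
      calc ‖∑' i, g (i+N)‖ ≤ ∑' i, ‖g (i+N)‖ := norm_tsum_le_tsum_norm hsn
        _ ≤ ∑' i, (1/8:ℝ)^(i+N) := Summable.tsum_le_tsum (fun i => hgnorm _) hsn hsh
        _ = (8/7) * (1/8:ℝ)^N := by
            simp_rw [pow_add]
            rw [tsum_mul_right, tsum_geometric_of_lt_one (by norm_num) (by norm_num)]
            norm_num
    have hSKP : ∀ N, MemKP P (S N) := by
      intro N
      induction N with
      | zero => simpa [hS] using (memKP_zero : MemKP P (0 : Y →L[ℂ] Y))
      | succ N ih =>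
          have : S (N+1) = S N + g N := Finset.sum_range_succ g N
          rw [this]
          exact memKP_add ih (memKP_smul _ (memKP_P hP (mm N)))
    have hKlim : Tendsto (fun N => ‖K - S N‖) atTop (𝓝 0) := by
      refine squeeze_zero (fun N => norm_nonneg _) htail ?_
      have := (tendsto_pow_atTop_nhds_zero_of_lt_one (by norm_num : (0:ℝ) ≤ 1/8)
        (by norm_num : (1/8:ℝ) < 1)).const_mul (8/7 : ℝ)
      simpa using this
    have hKKP : MemKP P K := memKP_limit hP hSKP hKlim
    -- the key lower bound
    have key : ∀ k, 1 ≤ ‖K.comp (B (nn k))‖ := by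
      intro k
      set T := B (nn k) with hT
      have e1 : g k = (K - S k) - (K - S (k+1)) := by
        have h : S (k+1) = S k + g k := Finset.sum_range_succ g k
        rw [h]; abel
      have e2 : (g k).comp T = K.comp T - (S k).comp T - (K - S (k+1)).comp T := by
        rw [e1, ContinuousLinearMap.sub_comp, ContinuousLinearMap.sub_comp]
      have h3 : ‖(g k).comp T‖ ≤ ‖K.comp T‖ + ‖(S k).comp T‖ + ‖K - S (k+1)‖ * ‖T‖ := by
        rw [e2]
        calc ‖K.comp T - (S k).comp T - (K - S (k+1)).comp T‖
            ≤ ‖K.comp T - (S k).comp T‖ + ‖(K - S (k+1)).comp T‖ := norm_sub_le _ _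
          _ ≤ (‖K.comp T‖ + ‖(S k).comp T‖) + ‖K - S (k+1)‖ * ‖T‖ := by
              gcongr
              · exact norm_sub_le _ _
              · exact ContinuousLinearMap.opNorm_comp_le _ _
      have h4 : ‖(S k).comp T‖ ≤ 8/7 := by
        rw [hS, ContinuousLinearMap.finset_sum_comp]
        calc ‖∑ j ∈ Finset.range k, (g j).comp T‖ ≤ ∑ j ∈ Finset.range k, ‖(g j).comp T‖ :=
              norm_sum_le _ _
          _ ≤ ∑ j ∈ Finset.range k, (1/8:ℝ)^j := by
              refine Finset.sum_le_sum (fun j hj => ?_)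
              have hj' : j < k := Finset.mem_range.mp hj
              have e : ‖(g j).comp T‖ = (1/8:ℝ)^j * ‖(P (mm j)).comp T‖ := by
                rw [hg]
                rw [ContinuousLinearMap.smul_comp]
                have := norm_smul ((1/8:ℝ)^j) ((P (mm j)).comp T)
                rw [this, Real.norm_eq_abs, abs_of_nonneg (by positivity)]
              rw [e]
              nlinarith [hsmall j k hj', pow_nonneg (by norm_num : (0:ℝ) ≤ 1/8) j,
                norm_nonneg ((P (mm j)).comp T)]
          _ ≤ ∑' j, (1/8:ℝ)^j := Summable.sum_le_tsum _ (fun j _ => by positivity) hgeom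
          _ = 8/7 := by
              rw [tsum_geometric_of_lt_one (by norm_num) (by norm_num)]; norm_num
      have h5 : (1/8:ℝ)^k * (‖T‖/2) ≤ ‖(g k).comp T‖ := by
        have e : ‖(g k).comp T‖ = (1/8:ℝ)^k * ‖(P (mm k)).comp T‖ := by
          rw [hg, ContinuousLinearMap.smul_comp]
          have := norm_smul ((1/8:ℝ)^k) ((P (mm k)).comp T)
          rw [this, Real.norm_eq_abs, abs_of_nonneg (by positivity)]
        rw [e]
        have := hhalf k
        have hpow : (0:ℝ) ≤ (1/8)^k := by positivity
        nlinarith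
      have h6 : ‖K - S (k+1)‖ * ‖T‖ ≤ (8/7) * (1/8:ℝ)^(k+1) * ‖T‖ := by
        have := htail (k+1)
        nlinarith [norm_nonneg T]
      have hpow1 : (1/8:ℝ)^k * 8^k = 1 := by
        rw [← mul_pow]; norm_num
      have h14 : (14:ℝ) ≤ (1/8:ℝ)^k * ‖T‖ := by
        have hb := hbig k
        have hpnn : (0:ℝ) ≤ (1/8)^k := by positivity
        nlinarith
      have hexp : (8/7:ℝ) * (1/8:ℝ)^(k+1) * ‖T‖ = (1/7) * ((1/8:ℝ)^k * ‖T‖) := by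
        rw [pow_succ]; ring
      rw [hexp] at h6
      nlinarith [h3, h4, h5, h6, h14]
    -- contradiction
    obtain ⟨N, hN⟩ := (tendsto_norm_zero_iff' (fun n => norm_nonneg _)).mp (hyp K hKKP).2 1 one_pos
    have h1 := hN (nn N) (hk_le N)
    have h2 := key N
    rw [hB] at h2
    linarith
  · rintro ⟨⟨C, hC⟩, hm⟩ K hK
    have hCnn : (0:ℝ) ≤ C := le_trans (norm_nonneg _) (hC 0)
    set D : ℝ := C + ‖A‖ with hD
    have hDnn : (0:ℝ) ≤ D := by positivity
    have hBn : ∀ n, ‖Aseq n - A‖ ≤ D := fun n =>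
      le_trans (norm_sub_le _ _) (by have := hC n; rw [hD]; linarith)
    clear_value D
    constructor
    · rw [tendsto_norm_zero_iff' (fun n => norm_nonneg _)]
      intro ε hε
      set δ : ℝ := ε/2/(D+1) with hδ
      have hδpos : 0 < δ := by
        rw [hδ]
        have h1 : (0:ℝ) < D + 1 := by linarith
        exact div_pos (by linarith) h1
      obtain ⟨M, hM⟩ := (tendsto_norm_zero_iff' (fun n => norm_nonneg _)).mp hK.2 δ hδpos
      have hQK : ‖(Qop P M).comp K‖ < δ := hM M le_rfl
      set δ' : ℝ := ε/2/(‖K‖+1) with hδ'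
      clear_value δ δ'
      have hδ'pos : 0 < δ' := by
        rw [hδ']
        exact div_pos (by linarith) (by positivity)
      obtain ⟨N, hN⟩ := (tendsto_norm_zero_iff' (fun n => norm_nonneg _)).mp (hm M).1 δ' hδ'pos
      refine ⟨N, fun n hn => ?_⟩
      have decomp : (Aseq n - A).comp K =
          ((Aseq n - A).comp (P M)).comp K + (Aseq n - A).comp ((Qop P M).comp K) := by
        have hid : P M + Qop P M = ContinuousLinearMap.id ℂ Y := by rw [Qop]; abel
        calc (Aseq n - A).comp K
            = (Aseq n - A).comp ((ContinuousLinearMap.id ℂ Y).comp K) := by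
              rw [ContinuousLinearMap.id_comp]
          _ = (Aseq n - A).comp (((P M) + Qop P M).comp K) := by rw [hid]
          _ = _ := by
              rw [ContinuousLinearMap.add_comp, ContinuousLinearMap.comp_add,
                ← ContinuousLinearMap.comp_assoc]
      have hb1 : ‖((Aseq n - A).comp (P M)).comp K‖ ≤ ‖(Aseq n - A).comp (P M)‖ * ‖K‖ :=
        ContinuousLinearMap.opNorm_comp_le _ _
      have hb2 : ‖(Aseq n - A).comp ((Qop P M).comp K)‖ ≤ ‖Aseq n - A‖ * ‖(Qop P M).comp K‖ :=
        ContinuousLinearMap.opNorm_comp_le _ _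
      have hval := hN n hn
      have hfin1 : ‖(Aseq n - A).comp (P M)‖ * ‖K‖ ≤ δ' * ‖K‖ :=
        mul_le_mul_of_nonneg_right (le_of_lt hval) (norm_nonneg _)
      have hfin2 : ‖Aseq n - A‖ * ‖(Qop P M).comp K‖ ≤ D * δ := by
        have := hBn n
        exact mul_le_mul this (le_of_lt hQK) (norm_nonneg _) hDnn
      have heq : δ' * (‖K‖ + 1) = ε/2 := by
        rw [hδ']; field_simp
      have hd1 : δ' * ‖K‖ < ε/2 := by nlinarith
      have hd2 : D * δ ≤ ε/2 := by
        have heq2 : δ * (D + 1) = ε/2 := by rw [hδ]; field_simp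
        nlinarith
      calc ‖(Aseq n - A).comp K‖
          ≤ ‖((Aseq n - A).comp (P M)).comp K‖ + ‖(Aseq n - A).comp ((Qop P M).comp K)‖ := by
            rw [decomp]; exact norm_add_le _ _
        _ ≤ δ' * ‖K‖ + D * δ := by
            have := le_trans hb1 hfin1
            have := le_trans hb2 hfin2
            linarith
        _ < ε := by linarith
    · rw [tendsto_norm_zero_iff' (fun n => norm_nonneg _)]
      intro ε hε
      set δ : ℝ := ε/2/(D+1) with hδ
      have hδpos : 0 < δ := by
        rw [hδ]
        have h1 : (0:ℝ) < D + 1 := by linarith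
        exact div_pos (by linarith) h1
      obtain ⟨M, hM⟩ := (tendsto_norm_zero_iff' (fun n => norm_nonneg _)).mp hK.1 δ hδpos
      have hKQ : ‖K.comp (Qop P M)‖ < δ := hM M le_rfl
      set δ' : ℝ := ε/2/(‖K‖+1) with hδ'
      clear_value δ δ'
      have hδ'pos : 0 < δ' := by
        rw [hδ']
        exact div_pos (by linarith) (by positivity)
      obtain ⟨N, hN⟩ := (tendsto_norm_zero_iff' (fun n => norm_nonneg _)).mp (hm M).2 δ' hδ'pos
      refine ⟨N, fun n hn => ?_⟩
      have decomp : K.comp (Aseq n - A) =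
          (K.comp (Qop P M)).comp (Aseq n - A) + K.comp ((P M).comp (Aseq n - A)) := by
        have hid : P M + Qop P M = ContinuousLinearMap.id ℂ Y := by rw [Qop]; abel
        calc K.comp (Aseq n - A)
            = K.comp ((ContinuousLinearMap.id ℂ Y).comp (Aseq n - A)) := by
              rw [ContinuousLinearMap.id_comp]
          _ = K.comp (((P M) + Qop P M).comp (Aseq n - A)) := by rw [hid]
          _ = _ := by
              rw [ContinuousLinearMap.add_comp, ContinuousLinearMap.comp_add,
                ← ContinuousLinearMap.comp_assoc]
              abel
      have hb1 : ‖(K.comp (Qop P M)).comp (Aseq n - A)‖ ≤ ‖K.comp (Qop P M)‖ * ‖Aseq n - A‖ :=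
        ContinuousLinearMap.opNorm_comp_le _ _
      have hb2 : ‖K.comp ((P M).comp (Aseq n - A))‖ ≤ ‖K‖ * ‖(P M).comp (Aseq n - A)‖ :=
        ContinuousLinearMap.opNorm_comp_le _ _
      have hval := hN n hn
      have hfin1 : ‖K.comp (Qop P M)‖ * ‖Aseq n - A‖ ≤ δ * D :=
        mul_le_mul (le_of_lt hKQ) (hBn n) (norm_nonneg _) (le_of_lt hδpos)
      have hfin2 : ‖K‖ * ‖(P M).comp (Aseq n - A)‖ ≤ ‖K‖ * δ' :=
        mul_le_mul_of_nonneg_left (le_of_lt hval) (norm_nonneg _)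
      have heq : δ' * (‖K‖ + 1) = ε/2 := by
        rw [hδ']; field_simp
      have hd2 : ‖K‖ * δ' < ε/2 := by nlinarith
      have hd1 : δ * D ≤ ε/2 := by
        have heq2 : δ * (D + 1) = ε/2 := by rw [hδ]; field_simp
        nlinarith
      calc ‖K.comp (Aseq n - A)‖
          ≤ ‖(K.comp (Qop P M)).comp (Aseq n - A)‖ + ‖K.comp ((P M).comp (Aseq n - A))‖ := by
            rw [decomp]; exact norm_add_le _ _
        _ ≤ δ * D + ‖K‖ * δ' := by
            have := le_trans hb1 hfin1
            have := le_trans hb2 hfin2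
            linarith
        _ < ε := by linarith
end

section
/- Suppose A, B ∈ S(Y) are bijective, A⁻¹ ∈ S(Y), and A − B ∈ M(Y). Then B⁻¹ ∈ S(Y). -/
open Filter Topology

section Aux

variable {Y : Type*} [NormedAddCommGroup Y] [NormedSpace ℂ Y]

lemma sconv_comp {P : ℕ → Y →L[ℂ] Y} {x : ℕ → Y} {x₀ : Y}
    (h : SConv P x x₀) {ns : ℕ → ℕ} (hns : Tendsto ns atTop atTop) :
    SConv P (fun i => x (ns i)) x₀ := by
  obtain ⟨⟨C, hC⟩, h2⟩ := h
  exact ⟨⟨C, fun j => hC _⟩, fun m => (h2 m).comp hns⟩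

lemma sconv_add {P : ℕ → Y →L[ℂ] Y} {x k : ℕ → Y} {x₀ z : Y}
    (hx : SConv P x x₀) (hk : SConv P k z) :
    SConv P (fun j => x j + k j) (x₀ + z) := by
  obtain ⟨⟨C, hC⟩, h2⟩ := hx
  obtain ⟨⟨D, hD⟩, h4⟩ := hk
  refine ⟨⟨C + D, fun j => (norm_add_le _ _).trans (add_le_add (hC j) (hD j))⟩, fun m => ?_⟩
  have : ∀ j, ‖P m (x j + k j - (x₀ + z))‖ ≤ ‖P m (x j - x₀)‖ + ‖P m (k j - z)‖ := by
    intro j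
    have : x j + k j - (x₀ + z) = (x j - x₀) + (k j - z) := by abel
    rw [this, map_add]
    exact norm_add_le _ _
  have hlim := (h2 m).add (h4 m)
  rw [add_zero] at hlim
  exact squeeze_zero (fun j => norm_nonneg _) this hlim

lemma sconv_unique {P : ℕ → Y →L[ℂ] Y} (hP : ApproxId P) {u : ℕ → Y} {a b : Y}
    (ha : SConv P u a) (hb : SConv P u b) : a = b := by
  have key : ∀ n, ‖P n (a - b)‖ = 0 := by
    intro n
    have hle : ∀ j, ‖P n (a - b)‖ ≤ ‖P n (u j - b)‖ + ‖P n (u j - a)‖ := by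
      intro j
      have h1 : P n (a - b) = P n (u j - b) - P n (u j - a) := by
        rw [← map_sub]; congr 1; abel
      rw [h1]
      exact norm_sub_le (P n (u j - b)) (P n (u j - a))
    have hlim := (hb.2 n).add (ha.2 n)
    rw [add_zero] at hlim
    have := le_of_tendsto_of_tendsto' (tendsto_const_nhds (x := ‖P n (a - b)‖)) hlim hle
    exact le_antisymm this (norm_nonneg _)
  have hub : ‖a - b‖ ≤ 0 := (hP.1 (a - b)).2 (fun v hv => by
    obtain ⟨n, rfl⟩ := hv
    exact le_of_eq (key n))
  have h0 : a - b = 0 := norm_le_zero_iff.mp hub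
  exact sub_eq_zero.mp h0

end Aux

/-- If `A, B ∈ S(Y)` are bijective, `A⁻¹ ∈ S(Y)` and
`A − B ∈ M(Y)`, then `B⁻¹ ∈ S(Y)`. -/
theorem statement17 {Y : Type*} [NormedAddCommGroup Y] [NormedSpace ℂ Y] [CompleteSpace Y]
    (P : ℕ → Y →L[ℂ] Y) (hP : ApproxId P)
    (A B : Y →L[ℂ] Y)
    (hAS : MemS P A) (hBS : MemS P B)
    (hAbij : Function.Bijective A) (hBbij : Function.Bijective B)
    (hAinv : ∃ Ainv : Y →L[ℂ] Y,
      A.comp Ainv = ContinuousLinearMap.id ℂ Y ∧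
      Ainv.comp A = ContinuousLinearMap.id ℂ Y ∧ MemS P Ainv)
    (hM : MemM P (A - B)) :
    ∃ Binv : Y →L[ℂ] Y,
      B.comp Binv = ContinuousLinearMap.id ℂ Y ∧
      Binv.comp B = ContinuousLinearMap.id ℂ Y ∧ MemS P Binv := by
  classical
  obtain ⟨Ainv, hA1, hA2, hAinvS⟩ := hAinv
  have hker : LinearMap.ker (B : Y →ₗ[ℂ] Y) = ⊥ := by
    rw [LinearMap.ker_eq_bot]; exact hBbij.1
  have hrange : LinearMap.range (B : Y →ₗ[ℂ] Y) = ⊤ := LinearMap.range_eq_top.mpr hBbij.2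
  let e := ContinuousLinearEquiv.ofBijective B hker hrange
  refine ⟨(e.symm : Y →L[ℂ] Y), ?_, ?_, ?_⟩
  · ext v
    exact e.apply_symm_apply v
  · ext v
    exact e.symm_apply_apply v
  · -- MemS for B⁻¹
    intro x x₀ hx
    set Binv : Y →L[ℂ] Y := (e.symm : Y →L[ℂ] Y) with hBinv
    have hBright : ∀ v : Y, B (Binv v) = v := fun v => e.apply_symm_apply v
    have hBleft : ∀ v : Y, Binv (B v) = v := fun v => e.symm_apply_apply v
    set y : ℕ → Y := fun j => Binv (x j) with hy
    obtain ⟨C, hC⟩ := hx.1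
    have hybdd : ∃ D : ℝ, ∀ j, ‖y j‖ ≤ D := by
      refine ⟨‖Binv‖ * C, fun j => ?_⟩
      calc ‖y j‖ ≤ ‖Binv‖ * ‖x j‖ := Binv.le_opNorm _
        _ ≤ ‖Binv‖ * C := by
            have := hC j
            nlinarith [norm_nonneg Binv, norm_nonneg (x j)]
    -- key: along any subsequence, a further subsequence of y converges strictly to Binv x₀
    have key : ∀ ns : ℕ → ℕ, Tendsto ns atTop atTop →
        ∃ ms : ℕ → ℕ, Tendsto ms atTop atTop ∧
          SConv P (fun i => y (ns (ms i))) (Binv x₀) := by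
      intro ns hns
      obtain ⟨D, hD⟩ := hybdd
      obtain ⟨φ, z, hφ, hKconv⟩ := hM (fun j => y (ns j)) ⟨D, fun j => hD _⟩
      have hφt : Tendsto (ns ∘ φ) atTop atTop := hns.comp hφ.tendsto_atTop
      set w := Ainv (x₀ + z) with hw
      -- identity: y j = Ainv (x j + (A - B) (y j))
      have hid : ∀ j, y j = Ainv (x j + (A - B) (y j)) := by
        intro j
        have h1 : (A - B) (y j) = A (y j) - x j := by
          simp [ContinuousLinearMap.sub_apply, hy, hBright]
        have h2 : x j + (A - B) (y j) = A (y j) := by rw [h1]; abel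
        rw [h2]
        have := congrArg (fun T : Y →L[ℂ] Y => T (y j)) hA2
        simpa using this.symm
      -- strict convergence of the subsequence of y to w
      have hxsub : SConv P (fun i => x (ns (φ i))) x₀ := sconv_comp hx hφt
      have hsum : SConv P (fun i => x (ns (φ i)) + (A - B) (y (ns (φ i)))) (x₀ + z) :=
        sconv_add hxsub hKconv
      have hyconv : SConv P (fun i => y (ns (φ i))) w := by
        have := hAinvS _ _ hsum
        have heq : (fun i => Ainv (x (ns (φ i)) + (A - B) (y (ns (φ i))))) =
            fun i => y (ns (φ i)) := by
          funext i; exact (hid (ns (φ i))).symm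
        rwa [heq] at this
      -- identify w with Binv x₀
      have hBy : SConv P (fun i => B (y (ns (φ i)))) (B w) := hBS _ _ hyconv
      have hBy' : (fun i => B (y (ns (φ i)))) = fun i => x (ns (φ i)) := by
        funext i; simp [hy, hBright]
      rw [hBy'] at hBy
      have hBw : B w = x₀ := sconv_unique hP hBy hxsub
      have hwB : w = Binv x₀ := by
        have := congrArg Binv hBw
        rwa [hBleft] at this
      exact ⟨φ, hφ.tendsto_atTop, hwB ▸ hyconv⟩
    refine ⟨hybdd, fun m => ?_⟩
    refine tendsto_of_subseq_tendsto (fun ns hns => ?_)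
    obtain ⟨ms, _, hconv⟩ := key ns hns
    exact ⟨ms, hconv.2 m⟩
end
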